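/- Let R be a Noetherian F-finite commutative ring of characteristic p, let (M,C) be an F-pure q-Cartier module over R and let f ∈ R. Then every right F-jumping exponent lies in ℤ[1/p]: if t ∈ FJN⁺(M,f), then t·q^m is an integer for some m ≥ 0. Equivalently, if t ≥ 0 is a real number with t·q^m ∉ ℤ for all m ≥ 0, then there exists ε > 0 with τ(M,f^{t+ε}) = τ(M,f^t). -/

import Mathlib

open Pointwise Function

/-- The test module `τ(M, f^t) = ⋃_{m ≥ 0} C^m (f^{⌈t q^m⌉} M)` of an F-pure `q`-Cartier
module `(M, C)` with respect to `f` at level `t ≥ 0`. -/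
def testSet {R M : Type*} [CommRing R] [AddCommGroup M] [Module R M]
    (C : M → M) (q : ℕ) (f : R) (t : ℝ) : Set M :=
  ⋃ m : ℕ, C^[m] '' ((f ^ ⌈t * (q : ℝ) ^ m⌉₊) • (Set.univ : Set M))

/-- The set `FJN⁺(M, f)` of right F-jumping exponents: `t ≥ 0` such that
`τ(M, f^{t+ε}) ⊊ τ(M, f^t)` for every `ε > 0`. -/
def FJNplus {R M : Type*} [CommRing R] [AddCommGroup M] [Module R M]
    (C : M → M) (q : ℕ) (f : R) : Set ℝ :=
  {t | 0 ≤ t ∧ ∀ ε : ℝ, 0 < ε → testSet C q f (t + ε) ⊂ testSet C q f t}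

section Aux

variable {R M : Type*} [CommRing R] [AddCommGroup M] [Module R M]
variable {C : M → M} {q : ℕ} {f : R}

lemma iterC_add (hCadd : ∀ x y : M, C (x + y) = C x + C y) (m : ℕ) (x y : M) :
    C^[m] (x + y) = C^[m] x + C^[m] y := by
  induction m generalizing x y with
  | zero => simp
  | succ m ih =>
      rw [Function.iterate_succ_apply, Function.iterate_succ_apply,
        Function.iterate_succ_apply, hCadd, ih]

lemma iterC_zero (hCadd : ∀ x y : M, C (x + y) = C x + C y) (m : ℕ) :
    C^[m] (0 : M) = 0 := by
  have h := iterC_add hCadd m 0 0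
  rw [add_zero] at h
  exact left_eq_add.mp h

lemma iterC_smul (hCsl : ∀ (a : R) (x : M), C (a ^ q • x) = a • C x) (m : ℕ) (a : R) (x : M) :
    C^[m] (a ^ q ^ m • x) = a • C^[m] x := by
  induction m generalizing x with
  | zero => simp
  | succ m ih =>
      rw [Function.iterate_succ_apply, Function.iterate_succ_apply,
        pow_succ, pow_mul, hCsl, ih]

/-- The set `C^[m] (f^n • M)` as a submodule. -/
def imgSM (C : M → M) (q : ℕ) (hCadd : ∀ x y : M, C (x + y) = C x + C y)
    (hCsl : ∀ (a : R) (x : M), C (a ^ q • x) = a • C x) (f : R) (m n : ℕ) :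
    Submodule R M where
  carrier := C^[m] '' ((f ^ n) • (Set.univ : Set M))
  add_mem' := by
    rintro a b ⟨_, ⟨x, -, rfl⟩, rfl⟩ ⟨_, ⟨y, -, rfl⟩, rfl⟩
    exact ⟨f ^ n • (x + y), Set.smul_mem_smul_set (Set.mem_univ _),
      by rw [smul_add, iterC_add hCadd]⟩
  zero_mem' :=
    ⟨f ^ n • (0 : M), Set.smul_mem_smul_set (Set.mem_univ _),
      by rw [smul_zero, iterC_zero hCadd]⟩
  smul_mem' := by
    rintro r _ ⟨_, ⟨x, -, rfl⟩, rfl⟩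
    exact ⟨f ^ n • (r ^ q ^ m • x), Set.smul_mem_smul_set (Set.mem_univ _),
      by rw [smul_comm, iterC_smul hCsl]⟩

lemma imgSM_step (hCadd : ∀ x y : M, C (x + y) = C x + C y)
    (hCsl : ∀ (a : R) (x : M), C (a ^ q • x) = a • C x)
    (hsurj : Function.Surjective C) (m n n' : ℕ) (h : n' ≤ q * n) :
    (imgSM C q hCadd hCsl f m n : Set M) ⊆ imgSM C q hCadd hCsl f (m + 1) n' := by
  rintro _ ⟨_, ⟨x, -, rfl⟩, rfl⟩
  obtain ⟨x', rfl⟩ := hsurj x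
  refine ⟨f ^ n' • (f ^ (q * n - n') • x'), Set.smul_mem_smul_set (Set.mem_univ _), ?_⟩
  have hx : f ^ n' • (f ^ (q * n - n') • x') = (f ^ n) ^ q • x' := by
    rw [smul_smul, ← pow_add, Nat.add_sub_cancel' h, mul_comm q n, pow_mul]
  rw [Function.iterate_succ_apply, hx, hCsl]

lemma imgSM_anti (hCadd : ∀ x y : M, C (x + y) = C x + C y)
    (hCsl : ∀ (a : R) (x : M), C (a ^ q • x) = a • C x)
    (m n n' : ℕ) (h : n ≤ n') :
    (imgSM C q hCadd hCsl f m n' : Set M) ⊆ imgSM C q hCadd hCsl f m n := by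
  rintro _ ⟨_, ⟨x, -, rfl⟩, rfl⟩
  exact ⟨f ^ n • (f ^ (n' - n) • x), Set.smul_mem_smul_set (Set.mem_univ _),
    by rw [smul_smul, ← pow_add, Nat.add_sub_cancel' h]⟩

end Aux

theorem stmt9 {R M : Type*} [CommRing R] [AddCommGroup M] [Module R M]
    (p : ℕ) [Fact p.Prime] [CharP R p] [IsNoetherianRing R]
    (hFF : (frobenius R p).Finite)
    (e q : ℕ) (he : 1 ≤ e) (hq : q = p ^ e)
    (C : M → M) (hCadd : ∀ x y : M, C (x + y) = C x + C y)
    (hCsl : ∀ (a : R) (x : M), C (a ^ q • x) = a • C x)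
    [Module.Finite R M] (hFpure : Function.Surjective C) (f : R) :
    -- every right F-jumping exponent lies in `ℤ[1/p]`
    (∀ t ∈ FJNplus C q f, ∃ (m : ℕ) (k : ℤ), t * (q : ℝ) ^ m = (k : ℝ)) ∧
    -- equivalently: if `t q^m` is never an integer then `τ` is constant just right of `t`
    (∀ t : ℝ, 0 ≤ t → (∀ (m : ℕ) (k : ℤ), t * (q : ℝ) ^ m ≠ (k : ℝ)) →
      ∃ ε : ℝ, 0 < ε ∧ testSet C q f (t + ε) = testSet C q f t) := by
  have hqpos : 0 < q := by
    rw [hq]; exact pow_pos (Fact.out (p := p.Prime)).pos e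
  have hqR : (0 : ℝ) < (q : ℝ) := by exact_mod_cast hqpos
  have key : ∀ t : ℝ, 0 ≤ t → (∀ (m : ℕ) (k : ℤ), t * (q : ℝ) ^ m ≠ (k : ℝ)) →
      ∃ ε : ℝ, 0 < ε ∧ testSet C q f (t + ε) = testSet C q f t := by
    intro t ht hirr
    set N : ℕ → Submodule R M :=
      fun m => imgSM C q hCadd hCsl f m ⌈t * (q : ℝ) ^ m⌉₊ with hN
    have hmono : Monotone N := by
      apply monotone_nat_of_le_succ
      intro m
      have hle : ⌈t * (q : ℝ) ^ (m + 1)⌉₊ ≤ q * ⌈t * (q : ℝ) ^ m⌉₊ := by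
        rw [Nat.ceil_le]
        push_cast
        calc t * (q : ℝ) ^ (m + 1) = (t * (q : ℝ) ^ m) * q := by ring
          _ ≤ (⌈t * (q : ℝ) ^ m⌉₊ : ℝ) * q :=
              mul_le_mul_of_nonneg_right (Nat.le_ceil _) hqR.le
          _ = (q : ℝ) * (⌈t * (q : ℝ) ^ m⌉₊ : ℝ) := mul_comm _ _
      intro x hx
      exact imgSM_step hCadd hCsl hFpure m _ _ hle hx
    obtain ⟨m0, hm0⟩ := monotone_stabilizes_iff_noetherian.mpr
      (inferInstance : IsNoetherian R M) ⟨N, hmono⟩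
    have hts : testSet C q f t = (N m0 : Set M) := by
      apply Set.Subset.antisymm
      · refine Set.iUnion_subset fun m => ?_
        show (N m : Set M) ⊆ (N m0 : Set M)
        rcases le_total m m0 with h | h
        · exact hmono h
        · exact (le_of_eq (hm0 m h).symm : N m ≤ N m0)
      · exact Set.subset_iUnion
          (fun m => C^[m] '' ((f ^ ⌈t * (q : ℝ) ^ m⌉₊) • (Set.univ : Set M))) m0
    set c : ℕ := ⌈t * (q : ℝ) ^ m0⌉₊ with hc
    have hlt : t * (q : ℝ) ^ m0 < (c : ℝ) := by
      refine lt_of_le_of_ne (Nat.le_ceil _) ?_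
      have := hirr m0 (c : ℤ)
      push_cast at this
      exact this
    refine ⟨((c : ℝ) - t * (q : ℝ) ^ m0) / (q : ℝ) ^ m0,
      div_pos (by linarith) (pow_pos hqR m0), ?_⟩
    set ε : ℝ := ((c : ℝ) - t * (q : ℝ) ^ m0) / (q : ℝ) ^ m0 with hε
    have hεnn : 0 ≤ ε := le_of_lt (div_pos (by linarith) (pow_pos hqR m0))
    have hceil : ⌈(t + ε) * (q : ℝ) ^ m0⌉₊ = c := by
      have hne : (q : ℝ) ^ m0 ≠ 0 := (pow_pos hqR m0).ne'
      have hval : (t + ε) * (q : ℝ) ^ m0 = (c : ℝ) := by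
        rw [hε]; field_simp; ring
      rw [hval, Nat.ceil_natCast]
    apply Set.Subset.antisymm
    · refine Set.iUnion_subset fun m => ?_
      refine Set.Subset.trans ?_ (Set.subset_iUnion
        (fun m => C^[m] '' ((f ^ ⌈t * (q : ℝ) ^ m⌉₊) • (Set.univ : Set M))) m)
      show (imgSM C q hCadd hCsl f m ⌈(t + ε) * (q : ℝ) ^ m⌉₊ : Set M)
          ⊆ (imgSM C q hCadd hCsl f m ⌈t * (q : ℝ) ^ m⌉₊ : Set M)
      refine imgSM_anti hCadd hCsl m _ _ (Nat.ceil_mono ?_)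
      exact mul_le_mul_of_nonneg_right (by linarith) (pow_nonneg hqR.le m)
    · rw [hts]
      refine Set.Subset.trans ?_ (Set.subset_iUnion
        (fun m => C^[m] '' ((f ^ ⌈(t + ε) * (q : ℝ) ^ m⌉₊) • (Set.univ : Set M))) m0)
      show (N m0 : Set M)
          ⊆ (imgSM C q hCadd hCsl f m0 ⌈(t + ε) * (q : ℝ) ^ m0⌉₊ : Set M)
      rw [hceil]
  refine ⟨?_, key⟩
  intro t ht
  by_contra hcon
  push_neg at hcon
  obtain ⟨ε, hε, heq⟩ := key t ht.1 hcon
  exact (ht.2 ε hε).ne heq
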